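/- Let K be a field of characteristic 0 and let P, Q ∈ K[x,y] be polynomials with Q(0,0) ≠ 0 and deg_y Q > 0, and let F = P/Q ∈ K(x,y). Let Q⋆ be a squarefree part of Q. Then for every natural number n there exists a polynomial A_n ∈ K[x,y] such that the n-th partial derivative of F with respect to y equals A_n / (Q·(Q⋆)^n), and bideg A_n ≤ bideg P + n·(deg_x Q⋆, deg_y Q⋆ − 1) (componentwise). -/

import Mathlib

open Polynomial PowerSeries

/-- `Qs` is a squarefree part of `Q`. -/
def IsSquarefreePart {R : Type*} [CommRing R] (Q Qs : R) : Prop :=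
  ∃ (m : ℕ) (f : Fin m → R),
    (∀ i, Squarefree (f i)) ∧
    (∀ i j, i ≠ j → IsRelPrime (f i) (f j)) ∧
    Q = ∏ i, f i ^ ((i : ℕ) + 1) ∧
    Qs = ∏ i, f i

/-- `deg_x` of a bivariate polynomial in `K[x][y]` (inner variable `x`). -/
noncomputable def degX {K : Type*} [Field K] (P : Polynomial (Polynomial K)) : ℕ :=
  P.support.sup fun j => (P.coeff j).natDegree

/-- A bivariate polynomial `Q ∈ K[x][y]` viewed as an element of `K(x)[[y]]`. -/
noncomputable def toSeries {K : Type*} [Field K] (Q : Polynomial (Polynomial K)) :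
    PowerSeries (RatFunc K) :=
  ↑(Q.map (algebraMap (Polynomial K) (RatFunc K)))

namespace IterDerivAux

variable {K : Type*} [Field K]

/-! ### `degX` API via the variable-swapping ring homomorphism -/

/-- swap the two variables of a bivariate polynomial -/
noncomputable def swap : Polynomial (Polynomial K) →+* Polynomial (Polynomial K) :=
  eval₂RingHom (mapRingHom (C : K →+* Polynomial K)) (C X)

lemma coeff_coeff_swap (P : Polynomial (Polynomial K)) (i j : ℕ) :
    ((swap P).coeff i).coeff j = (P.coeff j).coeff i := by
  rw [swap, coe_eval₂RingHom, eval₂_eq_sum, Polynomial.sum]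
  rw [finset_sum_coeff]
  simp only [← C_pow, Polynomial.coeff_mul_C, coe_mapRingHom, Polynomial.coeff_map]
  rw [finset_sum_coeff]
  simp only [Polynomial.coeff_C_mul, Polynomial.coeff_X_pow, mul_ite, mul_one, mul_zero]
  rw [Finset.sum_ite_eq P.support j (fun e => ((P.coeff e).coeff i))]
  split_ifs with h
  · rfl
  · simp [Polynomial.notMem_support_iff.mp h]

lemma degX_le_iff {P : Polynomial (Polynomial K)} {d : ℕ} :
    degX P ≤ d ↔ ∀ j, (P.coeff j).natDegree ≤ d := by
  simp only [degX]
  constructor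
  · intro h j
    by_cases hj : j ∈ P.support
    · exact le_trans (Finset.le_sup (f := fun j => (P.coeff j).natDegree) hj) h
    · simp [Polynomial.notMem_support_iff.mp hj]
  · intro h
    exact Finset.sup_le fun j _ => h j

lemma coeff_natDegree_le_degX (P : Polynomial (Polynomial K)) (j : ℕ) :
    (P.coeff j).natDegree ≤ degX P := degX_le_iff.mp le_rfl j

lemma natDegree_swap (P : Polynomial (Polynomial K)) : (swap P).natDegree = degX P := by
  apply le_antisymm
  · rw [Polynomial.natDegree_le_iff_coeff_eq_zero]
    intro i hi
    ext j
    rw [coeff_coeff_swap]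
    simp only [Polynomial.coeff_zero]
    exact Polynomial.coeff_eq_zero_of_natDegree_lt (lt_of_le_of_lt (coeff_natDegree_le_degX P j) hi)
  · rcases eq_or_ne P 0 with rfl | hP
    · simp [degX]
    obtain ⟨j0, hj0, hj0eq⟩ := Finset.exists_mem_eq_sup P.support
      (Polynomial.support_nonempty.mpr hP) (fun j => (P.coeff j).natDegree)
    apply Polynomial.le_natDegree_of_ne_zero
    intro h
    have h2 : ((swap P).coeff (degX P)).coeff j0 = 0 := by rw [h]; simp
    rw [coeff_coeff_swap] at h2
    rw [degX, hj0eq] at h2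
    exact Polynomial.mem_support_iff.mp hj0 (Polynomial.leadingCoeff_eq_zero.mp h2)

lemma swap_ne_zero {P : Polynomial (Polynomial K)} (hP : P ≠ 0) : swap P ≠ 0 := by
  intro h
  apply hP
  ext j : 1
  rw [Polynomial.coeff_zero]
  ext i
  rw [← coeff_coeff_swap, h]
  simp

lemma degX_mul_le (p q : Polynomial (Polynomial K)) :
    degX (p * q) ≤ degX p + degX q := by
  rw [← natDegree_swap, ← natDegree_swap p, ← natDegree_swap q, map_mul]
  exact Polynomial.natDegree_mul_le

lemma degX_sub_le (p q : Polynomial (Polynomial K)) :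
    degX (p - q) ≤ max (degX p) (degX q) := by
  rw [← natDegree_swap, ← natDegree_swap p, ← natDegree_swap q, map_sub]
  exact Polynomial.natDegree_sub_le _ _

lemma degX_add_le (p q : Polynomial (Polynomial K)) :
    degX (p + q) ≤ max (degX p) (degX q) := by
  rw [← natDegree_swap, ← natDegree_swap p, ← natDegree_swap q, map_add]
  exact Polynomial.natDegree_add_le _ _

lemma degX_prod {ι : Type*} (s : Finset ι) (f : ι → Polynomial (Polynomial K))
    (h : ∀ i ∈ s, f i ≠ 0) : degX (∏ i ∈ s, f i) = ∑ i ∈ s, degX (f i) := by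
  rw [← natDegree_swap, map_prod, Polynomial.natDegree_prod _ _ (fun i hi => swap_ne_zero (h i hi))]
  simp_rw [natDegree_swap]

lemma degX_natCast (n : ℕ) : degX (n : Polynomial (Polynomial K)) = 0 := by
  rw [← natDegree_swap, map_natCast, Polynomial.natDegree_natCast]

lemma degX_derivative_le (p : Polynomial (Polynomial K)) : degX (derivative p) ≤ degX p := by
  rw [degX_le_iff]
  intro j
  rw [Polynomial.coeff_derivative]
  refine le_trans Polynomial.natDegree_mul_le ?_
  rw [show ((j : Polynomial K) + 1) = ((j + 1 : ℕ) : Polynomial K) by push_cast; ring,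
    Polynomial.natDegree_natCast]
  simpa using coeff_natDegree_le_degX p (j + 1)

lemma degX_sum_le {ι : Type*} (s : Finset ι) (f : ι → Polynomial (Polynomial K)) (d : ℕ)
    (h : ∀ i ∈ s, degX (f i) ≤ d) : degX (∑ i ∈ s, f i) ≤ d := by
  rw [← natDegree_swap, map_sum]
  apply Polynomial.natDegree_sum_le_of_forall_le
  intro i hi
  rw [natDegree_swap]
  exact h i hi

/-! ### derivative of a finset product -/

lemma derivative_finset_prod {R : Type*} [CommSemiring R] {ι : Type*} [DecidableEq ι]
    (s : Finset ι) (g : ι → R[X]) :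
    derivative (∏ i ∈ s, g i) = ∑ i ∈ s, (∏ j ∈ s.erase i, g j) * derivative (g i) := by
  rw [Finset.prod_eq_multiset_prod, derivative_prod, Finset.sum_eq_multiset_sum]
  refine congr_arg _ (Multiset.map_congr rfl fun j hj => ?_)
  rw [Finset.prod_eq_multiset_prod, Finset.erase_val]

/-! ### the auxiliary polynomial `B = Q'⬝Qs/Q` -/

lemma exists_B {m : ℕ} (f : Fin m → Polynomial (Polynomial K)) (hfne : ∀ i, f i ≠ 0) :
    ∃ B : Polynomial (Polynomial K),
      derivative (∏ i, f i ^ ((i:ℕ)+1)) * (∏ i, f i) = (∏ i, f i ^ ((i:ℕ)+1)) * B ∧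
      degX B ≤ degX (∏ i, f i) ∧ B.natDegree ≤ (∏ i, f i).natDegree - 1 := by
  refine ⟨∑ i : Fin m, ((i:ℕ)+1 : Polynomial (Polynomial K)) *
      (derivative (f i) * ∏ j ∈ Finset.univ.erase i, f j), ?_, ?_, ?_⟩
  · rw [derivative_finset_prod, Finset.sum_mul, Finset.mul_sum]
    refine Finset.sum_congr rfl fun i _ => ?_
    rw [Polynomial.derivative_pow]
    have h1 : (∏ j, f j) = f i * ∏ j ∈ Finset.univ.erase i, f j :=
      (Finset.mul_prod_erase _ _ (Finset.mem_univ i)).symm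
    have h2 : (∏ j, f j ^ ((j:ℕ)+1))
        = f i ^ ((i:ℕ)+1) * ∏ j ∈ Finset.univ.erase i, f j ^ ((j:ℕ)+1) :=
      (Finset.mul_prod_erase _ _ (Finset.mem_univ i)).symm
    rw [h1, h2]
    simp only [Nat.add_sub_cancel, map_add, map_one, C_eq_natCast]
    push_cast
    ring
  · apply degX_sum_le
    intro i _
    calc degX (((i:ℕ)+1 : Polynomial (Polynomial K)) *
          (derivative (f i) * ∏ j ∈ Finset.univ.erase i, f j))
        ≤ degX (((i:ℕ)+1 : ℕ) : Polynomial (Polynomial K)) +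
          degX (derivative (f i) * ∏ j ∈ Finset.univ.erase i, f j) := by
          refine le_trans (le_of_eq ?_) (degX_mul_le _ _)
          push_cast
          rfl
      _ ≤ 0 + (degX (derivative (f i)) + degX (∏ j ∈ Finset.univ.erase i, f j)) := by
          rw [degX_natCast]
          exact add_le_add le_rfl (degX_mul_le _ _)
      _ ≤ degX (f i) + ∑ j ∈ Finset.univ.erase i, degX (f j) := by
          rw [zero_add, degX_prod _ _ (fun j _ => hfne j)]
          exact add_le_add (degX_derivative_le _) le_rfl
      _ = ∑ j, degX (f j) :=
          Finset.add_sum_erase Finset.univ (fun j => degX (f j)) (Finset.mem_univ i)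
      _ = degX (∏ i, f i) := (degX_prod _ _ (fun j _ => hfne j)).symm
  · apply Polynomial.natDegree_sum_le_of_forall_le
    intro i _
    rcases eq_or_ne (derivative (f i)) 0 with h | h
    · simp [h]
    have h1 : 1 ≤ (f i).natDegree := by
      by_contra h'
      push_neg at h'
      obtain ⟨a, ha⟩ := Polynomial.natDegree_eq_zero.mp (Nat.lt_one_iff.mp h')
      exact h (by rw [← ha, Polynomial.derivative_C])
    have hsum : (f i).natDegree + ∑ j ∈ Finset.univ.erase i, (f j).natDegree
        = ∑ j, (f j).natDegree :=
      Finset.add_sum_erase Finset.univ (fun j => (f j).natDegree) (Finset.mem_univ i)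
    have hprodnat : (∏ i, f i).natDegree = ∑ j, (f j).natDegree :=
      Polynomial.natDegree_prod _ _ (fun j _ => hfne j)
    calc (((i:ℕ)+1 : Polynomial (Polynomial K)) *
          (derivative (f i) * ∏ j ∈ Finset.univ.erase i, f j)).natDegree
        ≤ (((i:ℕ)+1 : Polynomial (Polynomial K))).natDegree +
          ((derivative (f i)).natDegree + (∏ j ∈ Finset.univ.erase i, f j).natDegree) :=
          le_trans Polynomial.natDegree_mul_le (add_le_add le_rfl Polynomial.natDegree_mul_le)
      _ ≤ 0 + (((f i).natDegree - 1) + ∑ j ∈ Finset.univ.erase i, (f j).natDegree) := by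
          rw [show (((i:ℕ)+1 : Polynomial (Polynomial K))) = (((i:ℕ)+1 : ℕ) :
            Polynomial (Polynomial K)) by push_cast; ring, Polynomial.natDegree_natCast]
          refine add_le_add le_rfl (add_le_add (Polynomial.natDegree_derivative_le _)
            (le_of_eq (Polynomial.natDegree_prod _ _ (fun j _ => hfne j))))
      _ ≤ (∏ i, f i).natDegree - 1 := by omega

/-! ### `toSeries` API -/

lemma toSeries_mul (p q : Polynomial (Polynomial K)) :
    toSeries (p * q) = toSeries p * toSeries q := by
  simp only [toSeries, Polynomial.map_mul, Polynomial.coe_mul]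

lemma toSeries_pow (p : Polynomial (Polynomial K)) (n : ℕ) :
    toSeries (p ^ n) = toSeries p ^ n := by
  simp only [toSeries, Polynomial.map_pow, Polynomial.coe_pow]

lemma toSeries_sub (p q : Polynomial (Polynomial K)) :
    toSeries (p - q) = toSeries p - toSeries q := by
  simp only [toSeries, Polynomial.map_sub, Polynomial.coe_sub]

lemma derivativeFun_toSeries (p : Polynomial (Polynomial K)) :
    (toSeries p).derivativeFun = toSeries (derivative p) := by
  rw [toSeries, toSeries, ← Polynomial.derivative_map]
  exact derivative_coe _

lemma constantCoeff_toSeries_ne_zero {p : Polynomial (Polynomial K)} (hp : p.eval 0 ≠ 0) :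
    PowerSeries.constantCoeff (R := RatFunc K) (toSeries p) ≠ 0 := by
  have h : PowerSeries.constantCoeff (R := RatFunc K) (toSeries p)
      = algebraMap (Polynomial K) (RatFunc K) (p.coeff 0) := by
    rw [toSeries, ← PowerSeries.coeff_zero_eq_constantCoeff_apply, Polynomial.coeff_coe,
      Polynomial.coeff_map]
  rw [h]
  intro h0
  apply hp
  rw [← Polynomial.coeff_zero_eq_eval_zero]
  exact RatFunc.algebraMap_injective K (by simpa using h0)

end IterDerivAux

open IterDerivAux

theorem iterated_derivative_rational_function (K : Type*) [Field K] [CharZero K]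
    (P Q Qs : Polynomial (Polynomial K))
    (hQ00 : (Q.eval 0).eval 0 ≠ 0) (hdegy : 0 < Q.natDegree)
    (hsf : IsSquarefreePart Q Qs) (n : ℕ) :
    ∃ A : Polynomial (Polynomial K),
      (PowerSeries.derivativeFun)^[n] (toSeries P * (toSeries Q)⁻¹) =
        toSeries A * (toSeries Q * (toSeries Qs) ^ n)⁻¹ ∧
      (degX A : ℤ) ≤ degX P + n * degX Qs ∧
      (A.natDegree : ℤ) ≤ P.natDegree + n * ((Qs.natDegree : ℤ) - 1) := by
  obtain ⟨m, f, hsq, -, hQdef, hQsdef⟩ := hsf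
  have hQne : Q ≠ 0 := by rintro rfl; simp at hQ00
  have hfne : ∀ i, f i ≠ 0 := by
    intro i hi
    apply hQne
    rw [hQdef]
    exact Finset.prod_eq_zero (Finset.mem_univ i) (by rw [hi]; simp)
  -- evaluation facts
  have hQeval : Q.eval 0 ≠ 0 := fun h => hQ00 (by rw [h]; simp)
  have hfe : ∀ i, (f i).eval 0 ≠ 0 := by
    intro i h
    apply hQeval
    rw [hQdef, eval_prod]
    exact Finset.prod_eq_zero (Finset.mem_univ i) (by rw [eval_pow, h]; simp)
  have hQseval : Qs.eval 0 ≠ 0 := by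
    rw [hQsdef, eval_prod]
    exact Finset.prod_ne_zero_iff.mpr fun i _ => hfe i
  have hcQ := constantCoeff_toSeries_ne_zero hQeval
  have hcQs := constantCoeff_toSeries_ne_zero hQseval
  -- degree facts
  have hQsdeg : Qs.natDegree = ∑ i, (f i).natDegree := by
    rw [hQsdef]; exact Polynomial.natDegree_prod _ _ fun i _ => hfne i
  have hQs1 : 1 ≤ Qs.natDegree := by
    by_contra h
    push_neg at h
    have hsum0 : ∑ i, (f i).natDegree = 0 := by omega
    have hz : ∀ i ∈ Finset.univ, (f i).natDegree = 0 :=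
      (Finset.sum_eq_zero_iff).mp hsum0
    have hq0 : Q.natDegree = 0 := by
      rw [hQdef, Polynomial.natDegree_prod _ _ fun i _ => pow_ne_zero _ (hfne i)]
      refine Finset.sum_eq_zero fun i _ => ?_
      rw [Polynomial.natDegree_pow, hz i (Finset.mem_univ i), mul_zero]
    omega
  -- the auxiliary polynomial B with Q' * Qs = Q * B
  obtain ⟨B, hB, hBx, hBy⟩ := exists_B f hfne
  rw [← hQdef, ← hQsdef] at hB
  rw [← hQsdef] at hBx hBy
  -- derivative of Q * Qs ^ k
  have hgpoly : ∀ k : ℕ, derivative (Q * Qs ^ k) * Qs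
      = (Q * Qs ^ k) * (B + (k : Polynomial (Polynomial K)) * derivative Qs) := by
    intro k
    rw [Polynomial.derivative_mul, Polynomial.derivative_pow]
    cases k with
    | zero => simpa using hB
    | succ j =>
      simp only [Nat.add_sub_cancel, C_eq_natCast]
      push_cast
      linear_combination (Qs ^ (j + 1)) * hB
  -- main induction
  have main : ∀ N : ℕ, ∃ A : Polynomial (Polynomial K),
      (PowerSeries.derivativeFun)^[N] (toSeries P * (toSeries Q)⁻¹) * toSeries (Q * Qs ^ N)
        = toSeries A ∧
      degX A ≤ degX P + N * degX Qs ∧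
      A.natDegree ≤ P.natDegree + N * (Qs.natDegree - 1) := by
    intro N
    induction N with
    | zero =>
      refine ⟨P, ?_, by simp, by simp⟩
      simp only [Function.iterate_zero, id_eq, pow_zero, mul_one]
      rw [mul_assoc, PowerSeries.inv_mul_cancel _ hcQ, mul_one]
    | succ k ih =>
      obtain ⟨A, hA, hAx, hAy⟩ := ih
      set u := (toSeries (Q * Qs ^ k))⁻¹ with hu
      have hgc : PowerSeries.constantCoeff (R := RatFunc K) (toSeries (Q * Qs ^ k)) ≠ 0 := by
        apply constantCoeff_toSeries_ne_zero
        rw [eval_mul, eval_pow]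
        exact mul_ne_zero hQeval (pow_ne_zero _ hQseval)
      have hgu : toSeries (Q * Qs ^ k) * u = 1 := PowerSeries.mul_inv_cancel _ hgc
      have hDn : (PowerSeries.derivativeFun)^[k] (toSeries P * (toSeries Q)⁻¹)
          = toSeries A * u := by
        rw [hu, PowerSeries.eq_mul_inv_iff_mul_eq hgc]
        exact hA
      have hDu : toSeries (Q * Qs ^ k) * PowerSeries.derivativeFun u
          + u * PowerSeries.derivativeFun (toSeries (Q * Qs ^ k)) = 0 := by
        have h0 := PowerSeries.derivativeFun_mul (toSeries (Q * Qs ^ k)) u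
        rw [hgu, PowerSeries.derivativeFun_one, smul_eq_mul, smul_eq_mul] at h0
        exact h0.symm
      have hkey : toSeries Qs * PowerSeries.derivativeFun (toSeries (Q * Qs ^ k))
          = toSeries (Q * Qs ^ k)
            * toSeries (B + (k : Polynomial (Polynomial K)) * derivative Qs) := by
        rw [derivativeFun_toSeries, ← toSeries_mul, ← toSeries_mul]
        exact congrArg toSeries (by rw [mul_comm]; exact hgpoly k)
      refine ⟨derivative A * Qs
          - A * (B + (k : Polynomial (Polynomial K)) * derivative Qs), ?_, ?_, ?_⟩
      · have hsplit : toSeries (Q * Qs ^ (k + 1)) = toSeries (Q * Qs ^ k) * toSeries Qs := by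
          rw [← toSeries_mul, pow_succ, mul_assoc]
        have hR : toSeries (derivative A * Qs
              - A * (B + (k : Polynomial (Polynomial K)) * derivative Qs))
            = toSeries (derivative A) * toSeries Qs
              - toSeries A * toSeries (B + (k : Polynomial (Polynomial K)) * derivative Qs) := by
          rw [toSeries_sub, toSeries_mul, toSeries_mul]
        rw [Function.iterate_succ_apply', hDn, PowerSeries.derivativeFun_mul,
          smul_eq_mul, smul_eq_mul, derivativeFun_toSeries, hsplit, hR]
        linear_combination (toSeries A * toSeries Qs) * hDu
          + (toSeries (derivative A) * toSeries Qs) * hgu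
          + (- toSeries A * u) * hkey
          + (- toSeries A
              * toSeries (B + (k : Polynomial (Polynomial K)) * derivative Qs)) * hgu
      · have h1 : degX (derivative A * Qs) ≤ degX A + degX Qs :=
          le_trans (degX_mul_le _ _) (add_le_add (degX_derivative_le _) le_rfl)
        have h2 : degX (A * (B + (k : Polynomial (Polynomial K)) * derivative Qs))
            ≤ degX A + degX Qs := by
          refine le_trans (degX_mul_le _ _) (add_le_add le_rfl ?_)
          refine le_trans (degX_add_le _ _) (max_le hBx ?_)
          refine le_trans (degX_mul_le _ _) ?_
          rw [degX_natCast, zero_add]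
          exact degX_derivative_le _
        calc degX (derivative A * Qs
              - A * (B + (k : Polynomial (Polynomial K)) * derivative Qs))
            ≤ max (degX (derivative A * Qs))
              (degX (A * (B + (k : Polynomial (Polynomial K)) * derivative Qs))) :=
              degX_sub_le _ _
          _ ≤ degX A + degX Qs := max_le h1 h2
          _ ≤ (degX P + k * degX Qs) + degX Qs := add_le_add hAx le_rfl
          _ = degX P + (k + 1) * degX Qs := by ring
      · have h1 : (derivative A * Qs).natDegree ≤ A.natDegree + (Qs.natDegree - 1) := by
          rcases eq_or_ne (derivative A) 0 with h | h
          · rw [h, zero_mul, Polynomial.natDegree_zero]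
            exact Nat.zero_le _
          · have hA1 : 1 ≤ A.natDegree := by
              by_contra h'
              push_neg at h'
              obtain ⟨a, ha⟩ := Polynomial.natDegree_eq_zero.mp (Nat.lt_one_iff.mp h')
              exact h (by rw [← ha, Polynomial.derivative_C])
            have hd := Polynomial.natDegree_derivative_le A
            have hm := Polynomial.natDegree_mul_le (p := derivative A) (q := Qs)
            omega
        have h2 : (A * (B + (k : Polynomial (Polynomial K)) * derivative Qs)).natDegree
            ≤ A.natDegree + (Qs.natDegree - 1) := by
          refine le_trans Polynomial.natDegree_mul_le (add_le_add le_rfl ?_)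
          refine le_trans (Polynomial.natDegree_add_le _ _) (max_le hBy ?_)
          refine le_trans Polynomial.natDegree_mul_le ?_
          rw [Polynomial.natDegree_natCast, zero_add]
          exact Polynomial.natDegree_derivative_le Qs
        calc (derivative A * Qs
              - A * (B + (k : Polynomial (Polynomial K)) * derivative Qs)).natDegree
            ≤ max (derivative A * Qs).natDegree
              (A * (B + (k : Polynomial (Polynomial K)) * derivative Qs)).natDegree :=
              Polynomial.natDegree_sub_le _ _
          _ ≤ A.natDegree + (Qs.natDegree - 1) := max_le h1 h2
          _ ≤ (P.natDegree + k * (Qs.natDegree - 1)) + (Qs.natDegree - 1) :=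
              add_le_add hAy le_rfl
          _ = P.natDegree + (k + 1) * (Qs.natDegree - 1) := by ring
  obtain ⟨A, hA, hAx, hAy⟩ := main n
  have hconst : PowerSeries.constantCoeff (R := RatFunc K) (toSeries Q * toSeries Qs ^ n) ≠ 0 := by
    rw [map_mul, map_pow]
    exact mul_ne_zero hcQ (pow_ne_zero _ hcQs)
  refine ⟨A, ?_, ?_, ?_⟩
  · rw [PowerSeries.eq_mul_inv_iff_mul_eq hconst, ← toSeries_pow, ← toSeries_mul]
    exact hA
  · exact_mod_cast hAx
  · have hc := (Nat.cast_le (α := ℤ)).mpr hAy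
    push_cast [Nat.cast_sub hQs1] at hc
    linarith
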